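/- Suppose C is Hom-finite. Let U →u V →v W →h U[1] be a distinguished triangle in C that is right almost split, with h ≠ 0 and W indecomposable having local endomorphism ring, and suppose W is isomorphic to W[1]. Let d = dim_k End(W)/Rad End(W), where Rad End(W) denotes the set of non-invertible endomorphisms of W (a two-sided ideal of the local ring End(W)). Then dim_k Hom(W,U) + dim_k End(W) = dim_k Hom(W,V) + 2d. -/

import Mathlib

open CategoryTheory Category Limits Pretriangulated

universe v u

lemma aux_ring_right_inv {A : Type*} [Ring A] [IsLocalRing A] {f s : A}
    (h1 : f * s = 1) : s * f = 1 := by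
  have hsf : (s * f) * (s * f) = s * f := by
    rw [mul_assoc, ← mul_assoc f s f, h1, one_mul]
  rcases IsLocalRing.isUnit_or_isUnit_of_add_one
      (show s * f + (1 - s * f) = 1 by abel) with hu | hu
  · obtain ⟨q, he⟩ := hu
    have h3 : (↑q⁻¹ : A) * ((s * f) * (s * f)) = ↑q⁻¹ * (s * f) := by rw [hsf]
    rw [← he, ← mul_assoc, Units.inv_mul, one_mul] at h3
    rw [← he, h3]
  · obtain ⟨q, he⟩ := hu
    have hz : (1 - s * f) * (s * f) = 0 := by
      rw [sub_mul, one_mul, hsf, sub_self]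
    have he0 : s * f = 0 := by
      have h4 : (↑q⁻¹ : A) * ((1 - s * f) * (s * f)) = s * f := by
        rw [← he, ← mul_assoc, Units.inv_mul, one_mul]
      rw [hz, mul_zero] at h4
      exact h4.symm
    exfalso
    apply one_ne_zero (α := A)
    calc (1 : A) = (f * s) * (f * s) := by rw [h1, one_mul]
      _ = f * ((s * f) * s) := by rw [mul_assoc, ← mul_assoc s f s]
      _ = 0 := by rw [he0, zero_mul, mul_zero]

lemma aux_isIso_of_isSplitEpi {C : Type u} [Category.{v} C] [Preadditive C] {W : C}
    (hWloc : IsLocalRing (End W)) (f : W ⟶ W) (hf : IsSplitEpi f) : IsIso f := by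
  obtain ⟨⟨s, hs⟩⟩ := hf
  have h2 := aux_ring_right_inv (A := End W) (f := f) (s := s) hs
  exact ⟨s, h2, hs⟩

lemma aux_isIso_neg {C : Type u} [Category.{v} C] [Preadditive C] {X Y : C}
    (f : X ⟶ Y) [IsIso f] : IsIso (-f) :=
  ⟨-(inv f), by simp, by simp⟩

section ShiftAux

variable {C : Type u} [Category.{v} C] [HasShift C ℤ]

lemma aux_not_isSplitEpi_shift {V W : C} (v : V ⟶ W) (hv : ¬ IsSplitEpi v) :
    ¬ IsSplitEpi (v⟦(-1 : ℤ)⟧') := by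
  intro hsp
  apply hv
  haveI := hsp
  set κ : shiftFunctor C (-1 : ℤ) ⋙ shiftFunctor C (1 : ℤ) ≅ 𝟭 C :=
    shiftFunctorCompIsoId C (-1 : ℤ) (1 : ℤ) (neg_add_cancel 1) with hκ
  have hvconj : v = κ.inv.app V ≫ (v⟦(-1 : ℤ)⟧')⟦(1 : ℤ)⟧' ≫ κ.hom.app W := by
    have hn := κ.hom.naturality v
    simp only [Functor.comp_map, Functor.id_map] at hn
    rw [hn, ← assoc, Iso.inv_hom_id_app, id_comp]
  rw [hvconj]
  infer_instance

lemma aux_ras_shift {V W : C} (v : V ⟶ W)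
    (hras : ∀ (X : C) (f : X ⟶ W), ¬ IsSplitEpi f → ∃ g : X ⟶ V, g ≫ v = f)
    (X : C) (f : X ⟶ W⟦(-1 : ℤ)⟧) (hf : ¬ IsSplitEpi f) :
    ∃ g : X ⟶ V⟦(-1 : ℤ)⟧, g ≫ v⟦(-1 : ℤ)⟧' = f := by
  set κ : shiftFunctor C (-1 : ℤ) ⋙ shiftFunctor C (1 : ℤ) ≅ 𝟭 C :=
    shiftFunctorCompIsoId C (-1 : ℤ) (1 : ℤ) (neg_add_cancel 1) with hκ
  set κ' : shiftFunctor C (1 : ℤ) ⋙ shiftFunctor C (-1 : ℤ) ≅ 𝟭 C :=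
    shiftFunctorCompIsoId C (1 : ℤ) (-1 : ℤ) (add_neg_cancel 1) with hκ'
  have hf₂ : ¬ IsSplitEpi ((f⟦(1 : ℤ)⟧') ≫ κ.hom.app W) := by
    intro hsp
    obtain ⟨⟨s, hs⟩⟩ := hsp
    apply hf
    have hs' : s ≫ f⟦(1 : ℤ)⟧' = κ.inv.app W := by
      rw [← cancel_mono (κ.hom.app W), assoc, hs, Iso.inv_hom_id_app]
    obtain ⟨t, ht⟩ := (shiftFunctor C (1 : ℤ)).map_surjective (κ.hom.app W ≫ s)
    refine ⟨⟨⟨t, ?_⟩⟩⟩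
    apply (shiftFunctor C (1 : ℤ)).map_injective
    rw [Functor.map_comp, ht, CategoryTheory.Functor.map_id, assoc, hs', Iso.hom_inv_id_app]
    rfl
  obtain ⟨g₂, hg₂⟩ := hras _ (f⟦(1 : ℤ)⟧' ≫ κ.hom.app W) hf₂
  refine ⟨κ'.inv.app X ≫ g₂⟦(-1 : ℤ)⟧', ?_⟩
  rw [assoc, ← Functor.map_comp, hg₂, Functor.map_comp]
  have hnat : κ'.inv.app X ≫ (f⟦(1 : ℤ)⟧')⟦(-1 : ℤ)⟧' = f ≫ κ'.inv.app (W⟦(-1 : ℤ)⟧) := by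
    have hn := κ'.inv.naturality f
    simp only [Functor.comp_map, Functor.id_map] at hn
    rw [← hn]
  rw [← assoc, hnat, assoc]
  have hcompat : κ'.inv.app (W⟦(-1 : ℤ)⟧) ≫ (κ.hom.app W)⟦(-1 : ℤ)⟧' = 𝟙 (W⟦(-1 : ℤ)⟧) := by
    rw [hκ, hκ', shift_shiftFunctorCompIsoId_hom_app]
    exact Iso.inv_hom_id_app _ _
  rw [hcompat, comp_id]

end ShiftAux

theorem dim_hom_defect_right_almost_split_of_iso_shift
    (k : Type*) [Field k] {C : Type u} [Category.{v} C] [Preadditive C] [Linear k C]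
    [HasZeroObject C] [HasShift C ℤ] [∀ n : ℤ, (shiftFunctor C n).Additive]
    [Pretriangulated C] [HasBinaryBiproducts C]
    [∀ X Y : C, FiniteDimensional k (X ⟶ Y)]
    {U V W : C} (u : U ⟶ V) (v : V ⟶ W) (h : W ⟶ U⟦(1 : ℤ)⟧)
    (hdist : Triangle.mk u v h ∈ distTriang C)
    (hras : ∀ (X : C) (f : X ⟶ W), ¬ IsSplitEpi f → ∃ g : X ⟶ V, g ≫ v = f)
    (hne : h ≠ 0) (hW : Indecomposable W) (hWloc : IsLocalRing (End W))
    (hshift : Nonempty (W ≅ W⟦(1 : ℤ)⟧))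
    (R : Submodule k (W ⟶ W)) (hR : (R : Set (W ⟶ W)) = {f : W ⟶ W | ¬ IsIso f}) :
    Module.finrank k (W ⟶ U) + Module.finrank k (W ⟶ W) =
      Module.finrank k (W ⟶ V) + 2 * Module.finrank k ((W ⟶ W) ⧸ R) := by
  classical
  obtain ⟨e⟩ := hshift
  have hvh : v ≫ h = 0 := comp_distTriang_mor_zero₂₃ (Triangle.mk u v h) hdist
  have hv : ¬ IsSplitEpi v := by
    intro hsp
    obtain ⟨⟨s, hs⟩⟩ := hsp
    apply hne
    have h8 : h = s ≫ (v ≫ h) := by rw [← assoc, hs, id_comp]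
    rw [h8, hvh, comp_zero]
  have hvm : ¬ IsSplitEpi (v⟦(-1 : ℤ)⟧') := aux_not_isSplitEpi_shift v hv
  -- the key range computation
  have key : ∀ (V' : C) (p : V' ⟶ W),
      (∀ f : W ⟶ W, ¬ IsSplitEpi f → ∃ g : W ⟶ V', g ≫ p = f) →
      (∀ g : W ⟶ V', ¬ IsIso (g ≫ p)) →
      LinearMap.range (Linear.rightComp k W p) = R := by
    intro V' p h₁ h₂
    ext f
    simp only [LinearMap.mem_range, Linear.rightComp_apply]
    constructor
    · rintro ⟨g, rfl⟩
      rw [← SetLike.mem_coe, hR]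
      exact h₂ g
    · intro hfR
      have h3 : ¬ IsIso f := by rw [← SetLike.mem_coe, hR] at hfR; exact hfR
      have h4 : ¬ IsSplitEpi f := fun hsp => h3 (aux_isIso_of_isSplitEpi hWloc f hsp)
      exact h₁ f h4
  -- application 1 : range of composition with v equals R
  have hb : LinearMap.range (Linear.rightComp k W v) = R := by
    apply key V v (hras W)
    intro g hiso
    apply hv
    exact ⟨⟨⟨inv (g ≫ v) ≫ g, by rw [assoc, IsIso.inv_hom_id]⟩⟩⟩
  -- an isomorphism W⟦-1⟧ ≅ W
  obtain ⟨e'⟩ : Nonempty ((W⟦(-1 : ℤ)⟧) ≅ W) :=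
    ⟨(shiftFunctor C (-1 : ℤ)).mapIso e ≪≫ (shiftEquiv C (1 : ℤ)).unitIso.symm.app W⟩
  -- opaque versions of the connecting morphisms of the inverse rotations
  obtain ⟨w1, hw1⟩ : ∃ w1 : (W⟦(-1 : ℤ)⟧) ⟶ U,
      w1 = (Triangle.mk u v h).invRotate.mor₁ := ⟨_, rfl⟩
  obtain ⟨m1, hm1⟩ : ∃ m1 : (V⟦(-1 : ℤ)⟧) ⟶ (W⟦(-1 : ℤ)⟧),
      m1 = (Triangle.mk u v h).invRotate.invRotate.mor₁ := ⟨_, rfl⟩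
  -- m1 is composition with v⟦-1⟧ followed by an isomorphism (after composing with e')
  obtain ⟨y, hyiso, hp⟩ : ∃ y : (W⟦(-1 : ℤ)⟧) ⟶ W, IsIso y ∧
      m1 ≫ e'.hom = v⟦(-1 : ℤ)⟧' ≫ y := by
    refine ⟨(-( ((shiftFunctorCompIsoId C (-1 : ℤ) (1 : ℤ) (neg_add_cancel 1)).inv.app
        W)⟦(-1 : ℤ)⟧' ≫ (shiftFunctorCompIsoId C (1 : ℤ) (-1 : ℤ)
        (add_neg_cancel 1)).hom.app (W⟦(-1 : ℤ)⟧))) ≫ e'.hom, ?_, ?_⟩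
    · haveI := aux_isIso_neg (((shiftFunctorCompIsoId C (-1 : ℤ) (1 : ℤ)
        (neg_add_cancel 1)).inv.app W)⟦(-1 : ℤ)⟧' ≫ (shiftFunctorCompIsoId C (1 : ℤ) (-1 : ℤ)
        (add_neg_cancel 1)).hom.app (W⟦(-1 : ℤ)⟧))
      infer_instance
    · rw [hm1]
      dsimp [Triangle.invRotate]
      simp
      erw [Functor.map_comp, Preadditive.neg_comp, assoc, assoc]
      rfl
  haveI := hyiso
  -- application 2 : range of composition with v⟦-1⟧' ≫ y equals R
  have hb₂ : LinearMap.range (Linear.rightComp k W (v⟦(-1 : ℤ)⟧' ≫ y)) = R := by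
    apply key
    · intro f hf
      have h5 : ¬ IsSplitEpi (f ≫ inv y) := by
        intro hsp
        obtain ⟨⟨s, hs⟩⟩ := hsp
        apply hf
        refine ⟨⟨⟨inv y ≫ s, ?_⟩⟩⟩
        have h6 : s ≫ f = y := by
          rw [← cancel_mono (inv y), assoc, hs, IsIso.hom_inv_id]
        rw [assoc, h6, IsIso.inv_hom_id]
      obtain ⟨g, hg⟩ := aux_ras_shift v hras W (f ≫ inv y) h5
      refine ⟨g, ?_⟩
      rw [← assoc, hg, assoc, IsIso.inv_hom_id, comp_id]
    · intro g hiso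
      apply hvm
      refine ⟨⟨⟨y ≫ inv (g ≫ (v⟦(-1 : ℤ)⟧' ≫ y)) ≫ g, ?_⟩⟩⟩
      have h7 : g ≫ v⟦(-1 : ℤ)⟧' = (g ≫ (v⟦(-1 : ℤ)⟧' ≫ y)) ≫ inv y := by
        rw [assoc, assoc, IsIso.hom_inv_id, comp_id]
      have h9 : inv (g ≫ (v⟦(-1 : ℤ)⟧' ≫ y)) ≫ g ≫ v⟦(-1 : ℤ)⟧' = inv y := by
        rw [h7, ← assoc, IsIso.inv_hom_id, id_comp]
      rw [assoc, assoc, h9, IsIso.hom_inv_id]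
  -- exactness of the Hom sequences
  have ex1 : LinearMap.ker (Linear.rightComp k W v) =
      LinearMap.range (Linear.rightComp k W u) := by
    ext f
    simp only [LinearMap.mem_ker, LinearMap.mem_range, Linear.rightComp_apply]
    constructor
    · intro hf
      obtain ⟨g, hg⟩ := Triangle.coyoneda_exact₂ (Triangle.mk u v h) hdist f hf
      exact ⟨g, hg.symm⟩
    · rintro ⟨g, rfl⟩
      have h10 : u ≫ v = 0 := comp_distTriang_mor_zero₁₂ (Triangle.mk u v h) hdist
      rw [assoc, h10, comp_zero]
  have ex2 : LinearMap.ker (Linear.rightComp k W u) =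
      LinearMap.range (Linear.rightComp k W w1) := by
    ext f
    simp only [LinearMap.mem_ker, LinearMap.mem_range, Linear.rightComp_apply]
    constructor
    · intro hf
      obtain ⟨g, hg⟩ := Triangle.coyoneda_exact₂ (Triangle.mk u v h).invRotate
        (inv_rot_of_distTriang _ hdist) f hf
      exact ⟨g, by rw [hw1]; exact hg.symm⟩
    · rintro ⟨g, rfl⟩
      have h11 : (Triangle.mk u v h).invRotate.mor₁ ≫ u = 0 :=
        comp_distTriang_mor_zero₁₂ (Triangle.mk u v h).invRotate
          (inv_rot_of_distTriang _ hdist)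
      rw [assoc, show w1 ≫ u = 0 by rw [hw1]; exact h11, comp_zero]
  have ex3 : LinearMap.ker (Linear.rightComp k W w1) =
      LinearMap.range (Linear.rightComp k W m1) := by
    ext f
    simp only [LinearMap.mem_ker, LinearMap.mem_range, Linear.rightComp_apply]
    constructor
    · intro hf
      rw [hw1] at hf
      obtain ⟨g, hg⟩ := Triangle.coyoneda_exact₂ (Triangle.mk u v h).invRotate.invRotate
        (inv_rot_of_distTriang _ (inv_rot_of_distTriang _ hdist)) f hf
      exact ⟨g, by rw [hm1]; exact hg.symm⟩
    · rintro ⟨g, rfl⟩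
      have h12 : (Triangle.mk u v h).invRotate.invRotate.mor₁ ≫
          (Triangle.mk u v h).invRotate.mor₁ = 0 :=
        comp_distTriang_mor_zero₁₂ (Triangle.mk u v h).invRotate.invRotate
          (inv_rot_of_distTriang _ (inv_rot_of_distTriang _ hdist))
      rw [assoc, show m1 ≫ w1 = 0 by rw [hw1, hm1]; exact h12, comp_zero]
  -- the linear equivalence induced by e'
  set E : (W ⟶ (W⟦(-1 : ℤ)⟧)) ≃ₗ[k] (W ⟶ W) :=
    LinearEquiv.ofLinear (Linear.rightComp k W e'.hom) (Linear.rightComp k W e'.inv)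
      (by apply LinearMap.ext; intro f; simp) (by apply LinearMap.ext; intro f; simp) with hE
  have hmap : (E : (W ⟶ (W⟦(-1 : ℤ)⟧)) →ₗ[k] (W ⟶ W)) ∘ₗ
      Linear.rightComp k W m1 = Linear.rightComp k W (v⟦(-1 : ℤ)⟧' ≫ y) := by
    apply LinearMap.ext
    intro g
    show (g ≫ m1) ≫ e'.hom = g ≫ (v⟦(-1 : ℤ)⟧' ≫ y)
    rw [assoc, hp]
  have hmR : Module.finrank k (LinearMap.range (Linear.rightComp k W m1)) =
      Module.finrank k R := by
    rw [← LinearEquiv.finrank_map_eq E, ← LinearMap.range_comp, hmap, hb₂]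
  -- rank-nullity bookkeeping
  have q1 : Module.finrank k (LinearMap.range (Linear.rightComp k W v)) +
      Module.finrank k (LinearMap.ker (Linear.rightComp k W v)) =
      Module.finrank k (W ⟶ V) := LinearMap.finrank_range_add_finrank_ker _
  have q2 : Module.finrank k (LinearMap.range (Linear.rightComp k W u)) +
      Module.finrank k (LinearMap.ker (Linear.rightComp k W u)) =
      Module.finrank k (W ⟶ U) := LinearMap.finrank_range_add_finrank_ker _
  have q3 : Module.finrank k (LinearMap.range (Linear.rightComp k W w1)) +
      Module.finrank k (LinearMap.ker (Linear.rightComp k W w1)) =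
      Module.finrank k (W ⟶ (W⟦(-1 : ℤ)⟧)) := LinearMap.finrank_range_add_finrank_ker _
  have q4 : Module.finrank k ((W ⟶ W) ⧸ R) + Module.finrank k R =
      Module.finrank k (W ⟶ W) := Submodule.finrank_quotient_add_finrank R
  have q5 : Module.finrank k (W ⟶ (W⟦(-1 : ℤ)⟧)) = Module.finrank k (W ⟶ W) := E.finrank_eq
  have n1 : Module.finrank k (LinearMap.range (Linear.rightComp k W v)) =
      Module.finrank k R := by rw [hb]
  have n2 : Module.finrank k (LinearMap.ker (Linear.rightComp k W v)) =
      Module.finrank k (LinearMap.range (Linear.rightComp k W u)) := by rw [ex1]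
  have n3 : Module.finrank k (LinearMap.ker (Linear.rightComp k W u)) =
      Module.finrank k (LinearMap.range (Linear.rightComp k W w1)) := by rw [ex2]
  have n4 : Module.finrank k (LinearMap.ker (Linear.rightComp k W w1)) =
      Module.finrank k R := by rw [ex3]; exact hmR
  omega
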